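/- Let C be an Hadamard code of length 2^s·n' with n' odd whose kernel has dimension k. Then the rank r of C satisfies r ≤ 2^{s+1}·n'/2^k + k − 1. -/

import Mathlib

/-- The all-ones vector. -/
def allOnes (m : ℕ) : Fin m → ZMod 2 := fun _ => 1

/-- Let `C` be an Hadamard code of length `2^s * n'` with `n'` odd, rank `r` and
kernel of dimension `k`. Then `r ≤ 2^(s+1) * n' / 2^k + k - 1`. -/
theorem stmt_13 (s n' : ℕ) (hs : 2 ≤ s) (hodd : Odd n')
    (C : Finset (Fin (2^s * n') → ZMod 2))
    (h0 : (0 : Fin (2^s * n') → ZMod 2) ∈ C) (hu : allOnes (2^s * n') ∈ C)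
    (hcard : C.card = 2^(s+1) * n')
    (hdist : ∀ x ∈ C, ∀ y ∈ C, x ≠ y → x ≠ y + allOnes (2^s * n') →
      hammingDist x y = 2^(s-1) * n')
    (r k : ℕ)
    (hr : r = Module.finrank (ZMod 2)
      (Submodule.span (ZMod 2) (C : Set (Fin (2^s * n') → ZMod 2))))
    (hk : k = Module.finrank (ZMod 2)
      (Submodule.span (ZMod 2)
        {z : Fin (2^s * n') → ZMod 2 |
          (fun v => v + z) '' (C : Set (Fin (2^s * n') → ZMod 2)) = (C : Set _)})) :
    r ≤ 2^(s+1) * n' / 2^k + k - 1 := by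

  -- The kernel as a submodule
  let K : Submodule (ZMod 2) (Fin (2^s * n') → ZMod 2) :=
  { carrier := {z | (fun v => v + z) '' (C : Set (Fin (2^s * n') → ZMod 2)) = (C : Set _)}
    add_mem' := by
      intro a b ha hb
      simp only [Set.mem_setOf_eq] at *
      have hcomp : (fun v : Fin (2^s * n') → ZMod 2 => v + (a + b)) =
          (fun v => v + b) ∘ (fun v => v + a) := by
        funext v; simp [add_assoc]
      rw [hcomp, Set.image_comp, ha, hb]
    zero_mem' := by simp
    smul_mem' := by
      intro c z hz
      fin_cases c
      · show ((0 : ZMod 2) • z) ∈ {z | _ = _}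
        rw [zero_smul]
        simp
      · show ((1 : ZMod 2) • z) ∈ {z | _ = _}
        rw [one_smul]
        exact hz }
  have hk' : k = Module.finrank (ZMod 2) K := by
    rw [hk]
    exact congrArg (fun S : Submodule (ZMod 2) (Fin (2^s * n') → ZMod 2) =>
      Module.finrank (ZMod 2) S) (Submodule.span_eq K)
  -- membership: adding a kernel element preserves C
  have hmem : ∀ z ∈ K, ∀ c ∈ C, c + z ∈ C := by
    intro z hz c hc
    have hz' : (fun v : Fin (2^s * n') → ZMod 2 => v + z) '' (C : Set _) = (C : Set _) := hz
    have : c + z ∈ (fun v : Fin (2^s * n') → ZMod 2 => v + z) '' (C : Set _) := ⟨c, hc, rfl⟩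
    rw [hz'] at this
    exact this
  haveI instQ : DecidableEq ((Fin (2^s * n') → ZMod 2) ⧸ K) := Classical.decEq _
  haveI instK : Fintype K := Fintype.ofFinite _
  have hKcard : Fintype.card K = 2 ^ k := by
    rw [hk']
    have := Module.card_eq_pow_finrank (K := ZMod 2) (V := K)
    simpa using this
  -- fibers of the quotient map
  have hfib : ∀ c ∈ C, (C.filter (fun x => K.mkQ x = K.mkQ c)).card = 2 ^ k := by
    intro c hc
    rw [← hKcard]
    rw [← Finset.card_univ]
    refine (Finset.card_nbij (fun z : K => c + (z : Fin (2^s * n') → ZMod 2)) ?_ ?_ ?_).symm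
    · intro z _
      refine Finset.mem_filter.mpr ⟨hmem z z.2 c hc, ?_⟩
      refine (Submodule.Quotient.eq K).mpr ?_
      have : c + (z : Fin (2^s * n') → ZMod 2) - c = (z : Fin (2^s * n') → ZMod 2) := by ring
      rw [this]; exact z.2
    · intro a _ b _ hab
      exact Subtype.ext (by simpa using add_left_cancel hab)
    · intro x hx
      rw [Finset.coe_filter] at hx
      obtain ⟨hxC, hxq⟩ := hx
      have hz : x - c ∈ K := (Submodule.Quotient.eq K).mp hxq
      refine ⟨⟨x - c, hz⟩, Finset.mem_coe.mpr (Finset.mem_univ _), ?_⟩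
      show c + (x - c) = x
      ring
  -- cardinality count
  set M := (C.image (fun x => K.mkQ x)).card with hM
  have hCcard : C.card = M * 2 ^ k := by
    rw [Finset.card_eq_sum_card_image (fun x => K.mkQ x) C]
    rw [Finset.sum_congr rfl (fun b hb => ?_), Finset.sum_const, smul_eq_mul]
    obtain ⟨c, hc, rfl⟩ := Finset.mem_image.mp hb
    exact hfib c hc
  have hM0 : (0 : (Fin (2^s * n') → ZMod 2) ⧸ K) ∈ C.image (fun x => K.mkQ x) :=
    Finset.mem_image.mpr ⟨0, h0, by simp⟩
  have hM1 : 1 ≤ M := Finset.card_pos.mpr ⟨0, hM0⟩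
  -- representatives of nonzero cosets
  set T : Finset (Fin (2^s * n') → ZMod 2) :=
    ((C.image (fun x => K.mkQ x)).erase 0).image (fun q => Quotient.out q) with hT
  have hTcard : T.card ≤ M - 1 := by
    calc T.card ≤ ((C.image (fun x => K.mkQ x)).erase 0).card := Finset.card_image_le
    _ = M - 1 := by rw [Finset.card_erase_of_mem hM0]
  have hout : ∀ q : (Fin (2^s * n') → ZMod 2) ⧸ K, K.mkQ (Quotient.out q) = q := by
    intro q
    rw [Submodule.mkQ_apply]
    exact Quotient.out_eq q
  -- span inclusion
  have hsub : Submodule.span (ZMod 2) (C : Set (Fin (2^s * n') → ZMod 2)) ≤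
      K ⊔ Submodule.span (ZMod 2) (T : Set (Fin (2^s * n') → ZMod 2)) := by
    rw [Submodule.span_le]
    intro c hc
    by_cases h0' : K.mkQ c = 0
    · have : c ∈ K := by
        rw [Submodule.mkQ_apply, Submodule.Quotient.mk_eq_zero] at h0'
        exact h0'
      exact Submodule.mem_sup_left this
    · have hTm : Quotient.out (K.mkQ c) ∈ T := by
        refine Finset.mem_image.mpr ⟨K.mkQ c, ?_, rfl⟩
        exact Finset.mem_erase.mpr ⟨h0', Finset.mem_image.mpr ⟨c, hc, rfl⟩⟩
      have hz : c - Quotient.out (K.mkQ c) ∈ K := by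
        refine (Submodule.Quotient.eq K).mp ?_
        rw [← Submodule.mkQ_apply, ← Submodule.mkQ_apply, hout]
      have hce : c = Quotient.out (K.mkQ c) + (c - Quotient.out (K.mkQ c)) := by ring
      rw [hce]
      exact add_mem (Submodule.mem_sup_right (Submodule.subset_span hTm))
        (Submodule.mem_sup_left hz)
  -- rank bound
  have hrank : r ≤ k + (M - 1) := by
    rw [hr]
    calc Module.finrank (ZMod 2) (Submodule.span (ZMod 2) (C : Set (Fin (2^s * n') → ZMod 2)))
        ≤ Module.finrank (ZMod 2)
          (K ⊔ Submodule.span (ZMod 2) (T : Set (Fin (2^s * n') → ZMod 2)) :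
            Submodule (ZMod 2) (Fin (2^s * n') → ZMod 2)) :=
          Submodule.finrank_mono hsub
      _ ≤ Module.finrank (ZMod 2) K +
          Module.finrank (ZMod 2)
            (Submodule.span (ZMod 2) (T : Set (Fin (2^s * n') → ZMod 2))) := by
          have := Submodule.finrank_sup_add_finrank_inf_eq K
            (Submodule.span (ZMod 2) (T : Set (Fin (2^s * n') → ZMod 2)))
          omega
      _ ≤ k + (M - 1) := by
          have h1 : Module.finrank (ZMod 2)
              (Submodule.span (ZMod 2) (T : Set (Fin (2^s * n') → ZMod 2))) ≤ T.card :=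
            finrank_span_finset_le_card T
          omega
  -- arithmetic
  have hdiv : 2^(s+1) * n' / 2^k = M := by
    rw [← hcard, hCcard, Nat.mul_div_cancel _ (by positivity)]
  omega
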